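/- Let p ∈ (1,2) and a > 0, and let ψ : [0,1) → [0,∞) be continuously differentiable with ψ(0) = 0, ψ(y) > 0 for y ∈ (0,1), satisfying ψ'(y) + (p/(p-1)) ψ(y)^{(p-1)/p} = (p a^{2-p}/(p-1))(1-y) for all y ∈ (0,1). If ψ(y)(1-y)^{-p} → 0 as y → 1, then lim_{y→1} ψ(y)(1-y)^{-p/(p-1)} = a^{p(2-p)/(p-1)}. -/

import Mathlib

open Set Filter Topology

/-- `ψ : [0,1) → [0,∞)` is continuously differentiable (with derivative `ψd`), `ψ(0) = 0`,
and `ψ' + (p/(p-1)) ψ^{(p-1)/p} = (p a^{2-p}/(p-1))(1-y)` holds on `(0,1)`. -/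
def PsiSol (p a : ℝ) (ψ ψd : ℝ → ℝ) : Prop :=
  (∀ y ∈ Set.Ico (0:ℝ) 1, HasDerivWithinAt ψ (ψd y) (Set.Ico 0 1) y) ∧
  ContinuousOn ψd (Set.Ico 0 1) ∧
  (∀ y ∈ Set.Ico (0:ℝ) 1, 0 ≤ ψ y) ∧
  ψ 0 = 0 ∧
  (∀ y ∈ Set.Ioo (0:ℝ) 1,
    ψd y + (p/(p-1)) * ψ y ^ ((p-1)/p) = (p * a ^ (2-p) / (p-1)) * (1-y))

/-- If `f' ≤ 0` on `[Y,Z]`, then `f Z ≤ f Y`. -/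
lemma antitone_aux {f f' : ℝ → ℝ} {Y Z : ℝ} (hYZ : Y ≤ Z)
    (hd : ∀ x ∈ Icc Y Z, HasDerivAt f (f' x) x)
    (hle : ∀ x ∈ Icc Y Z, f' x ≤ 0) : f Z ≤ f Y := by
  have h := antitoneOn_of_deriv_nonpos (convex_Icc Y Z)
    (fun x hx => (hd x hx).continuousAt.continuousWithinAt)
    (fun x hx => ((hd x (interior_subset hx)).differentiableAt).differentiableWithinAt)
    (fun x hx => by
      rw [(hd x (interior_subset hx)).deriv]
      exact hle x (interior_subset hx))
  exact h (left_mem_Icc.2 hYZ) (right_mem_Icc.2 hYZ) hYZ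

/-- Persistence: if `h y1 ≤ 0` and whenever `h = 0` the derivative is negative,
then `h ≤ 0` on `[y1,Z]`. -/
lemma persist_aux {h h' : ℝ → ℝ} {y1 Z : ℝ} (hy : y1 ≤ Z)
    (hd : ∀ y ∈ Icc y1 Z, HasDerivAt h (h' y) y)
    (hneg : ∀ y ∈ Icc y1 Z, h y = 0 → h' y < 0)
    (h1 : h y1 ≤ 0) : h Z ≤ 0 := by
  by_contra hZ
  push_neg at hZ
  set S : Set ℝ := {y ∈ Icc y1 Z | h y ≤ 0} with hS
  have hScl : IsClosed S := by
    have : S = Icc y1 Z ∩ h ⁻¹' (Iic 0) := rfl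
    rw [this]
    exact ContinuousOn.preimage_isClosed_of_isClosed
      (fun x hx => (hd x hx).continuousAt.continuousWithinAt) isClosed_Icc isClosed_Iic
  have hSne : S.Nonempty := ⟨y1, ⟨⟨le_refl _, hy⟩, h1⟩⟩
  have hSbdd : BddAbove S := ⟨Z, fun x hx => hx.1.2⟩
  set z := sSup S with hz
  have hzS : z ∈ S := hScl.csSup_mem hSne hSbdd
  have hzZ : z ≤ Z := hzS.1.2
  have hzZ' : z < Z := lt_of_le_of_ne hzZ (fun e => by rw [e] at hzS; exact absurd hzS.2 (not_le.2 hZ))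
  have hy1z : y1 ≤ z := hzS.1.1
  have hpos : ∀ y ∈ Ioc z Z, 0 < h y := by
    intro y hy'
    by_contra hc
    push_neg at hc
    have : y ∈ S := ⟨⟨le_trans hy1z hy'.1.le, hy'.2⟩, hc⟩
    exact absurd (le_csSup hSbdd this) (not_le.2 hy'.1)
  -- h z ≥ 0 by right continuity
  have hne : (𝓝[Ioc z Z] z).NeBot := by
    rw [← mem_closure_iff_nhdsWithin_neBot, closure_Ioc (ne_of_lt hzZ')]
    exact left_mem_Icc.2 hzZ
  have hcz : Tendsto h (𝓝[Ioc z Z] z) (𝓝 (h z)) :=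
    ((hd z hzS.1).continuousAt.continuousWithinAt)
  have hz0 : h z = 0 := le_antisymm hzS.2 (ge_of_tendsto hcz (by
    filter_upwards [self_mem_nhdsWithin] with y hy'
    exact (hpos y hy').le))
  have hd' : h' z < 0 := hneg z hzS.1 hz0
  -- slope argument
  have hslope : Tendsto (slope h z) (𝓝[Ioc z Z \ {z}] z) (𝓝 (h' z)) :=
    hasDerivWithinAt_iff_tendsto_slope.1 ((hd z hzS.1).hasDerivWithinAt)
  have hne2 : (𝓝[Ioc z Z \ {z}] z).NeBot := by
    rwa [Set.diff_singleton_eq_self (fun hmem => lt_irrefl z hmem.1)]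
  obtain ⟨y, hsl, hyS⟩ :=
    (((tendsto_order.1 hslope).2 0 hd').and (eventually_mem_nhdsWithin : ∀ᶠ x in 𝓝[Ioc z Z \ {z}] z, x ∈ Ioc z Z \ {z})).exists
  have hyz : z < y := hyS.1.1
  rw [slope_def_field, hz0, sub_zero] at hsl
  have hy' : (0:ℝ) < y - z := sub_pos.2 hyz
  have : h y < 0 := by
    rcases div_neg_iff.1 hsl with ⟨h5, h6⟩ | ⟨h5, h6⟩
    · linarith
    · exact h5
  exact absurd this (not_lt.2 (hpos y hyS.1).le)

/-- If `g' ≤ -c(1-x)` on `[Y,Z]`, then `g Z ≤ g Y - c((1-Y)² - (1-Z)²)/2`. -/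
lemma decrease_aux {g g' : ℝ → ℝ} {Y Z c : ℝ} (hYZ : Y ≤ Z)
    (hd : ∀ x ∈ Icc Y Z, HasDerivAt g (g' x) x)
    (hle : ∀ x ∈ Icc Y Z, g' x ≤ -(c*(1-x))) :
    g Z ≤ g Y - c*((1-Y)^2 - (1-Z)^2)/2 := by
  have key : g Z + c*(Z - Z^2/2) ≤ g Y + c*(Y - Y^2/2) := by
    apply antitone_aux (f' := fun x => g' x + c*(1-x)) hYZ
    · intro x hx
      have h1 : HasDerivAt (fun t : ℝ => c*(t - t^2/2)) (c*(1-x)) x := by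
        have := ((hasDerivAt_id x).sub ((hasDerivAt_pow 2 x).div_const 2)).const_mul c
        refine this.congr_deriv ?_
        push_cast
        ring
      exact (hd x hx).add h1
    · intro x hx
      have := hle x hx
      linarith
  have hring : c*((1-Y)^2 - (1-Z)^2)/2 = c*(Z - Z^2/2) - c*(Y - Y^2/2) := by ring
  linarith
set_option maxHeartbeats 2000000 in
/-- **Refined asymptotics.** If moreover `ψ > 0` on `(0,1)` and
`ψ(y)(1-y)^{-p} → 0` as `y → 1`, then `ψ(y)(1-y)^{-p/(p-1)} → a^{p(2-p)/(p-1)}`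
as `y → 1`. -/
theorem stmt15 (p a : ℝ) (hp : p ∈ Set.Ioo (1:ℝ) 2) (ha : 0 < a)
    (ψ ψd : ℝ → ℝ) (hψ : PsiSol p a ψ ψd)
    (hpos : ∀ y ∈ Set.Ioo (0:ℝ) 1, 0 < ψ y)
    (h0 : Tendsto (fun y => ψ y * (1-y) ^ (-p)) (𝓝[<] (1:ℝ)) (𝓝 0)) :
    Tendsto (fun y => ψ y * (1-y) ^ (-(p/(p-1)))) (𝓝[<] (1:ℝ))
      (𝓝 (a ^ (p*(2-p)/(p-1)))) := by
  obtain ⟨hp1, hp2⟩ := hp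
  have hp0 : 0 < p := by linarith
  have hp1' : 0 < p - 1 := by linarith
  set q : ℝ := p/(p-1) with hqdef
  have hq2 : 2 < q := by
    rw [hqdef, lt_div_iff₀ hp1']; linarith
  have hq0 : 0 < q := by linarith
  have hq1 : 1 ≤ q := by linarith
  set b : ℝ := a ^ (2-p) with hbdef
  have hb : 0 < b := Real.rpow_pos_of_pos ha _
  have h1q : (1:ℝ)/q = (p-1)/p := by rw [hqdef, one_div_div]
  -- the ODE in convenient form
  have hode : ∀ y ∈ Set.Ioo (0:ℝ) 1, ψd y = q * b * (1-y) - q * ψ y ^ ((1:ℝ)/q) := by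
    intro y hy
    have h := hψ.2.2.2.2 y hy
    rw [h1q, hqdef, hbdef]
    have e : p/(p-1) * a^(2-p) * (1-y) = p * a^(2-p) / (p-1) * (1-y) := by ring
    linarith [h, e]
  -- derivative of ψ without constraint
  have hDψ : ∀ y ∈ Set.Ioo (0:ℝ) 1, HasDerivAt ψ (ψd y) y := by
    intro y hy
    refine (hψ.1 y ⟨hy.1.le, hy.2⟩).hasDerivAt ?_
    exact mem_nhds_iff.2 ⟨Set.Ioo 0 1, Set.Ioo_subset_Ico_self, isOpen_Ioo, hy⟩
  -- derivative of barrier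
  have hbar : ∀ (κ : ℝ) (y : ℝ), HasDerivAt (fun t => κ * (1-t)^q) (-(κ * q * (1-y)^(q-1))) y := by
    intro κ y
    have h1 : HasDerivAt (fun t : ℝ => 1 - t) (-1) y := by
      simpa using (hasDerivAt_id y).const_sub 1
    have := (h1.rpow_const (Or.inr hq1)).const_mul κ
    refine this.congr_deriv ?_
    ring
  -- rpow root identities
  have hroot : ∀ β t : ℝ, 0 ≤ β → 0 ≤ t → (β^q * t^q) ^ ((1:ℝ)/q) = β * t := by
    intro β t hβ ht
    rw [← Real.mul_rpow hβ ht, ← Real.rpow_mul (mul_nonneg hβ ht), mul_one_div,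
      div_self hq0.ne', Real.rpow_one]
  have hrootpow : ∀ x : ℝ, 0 ≤ x → (x ^ ((1:ℝ)/q)) ^ q = x := by
    intro x hx
    rw [← Real.rpow_mul hx, one_div_mul_cancel hq0.ne', Real.rpow_one]
  -- root comparisons
  have hrootle : ∀ β y : ℝ, 0 ≤ β → y ∈ Set.Ioo (0:ℝ) 1 → ψ y ≤ β^q * (1-y)^q →
      ψ y ^ ((1:ℝ)/q) ≤ β * (1-y) := by
    intro β y hβ hy h
    have := Real.rpow_le_rpow (hpos y hy).le h (by positivity : (0:ℝ) ≤ 1/q)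
    rwa [hroot β (1-y) hβ (by linarith [hy.2])] at this
  have hrootge : ∀ β y : ℝ, 0 ≤ β → y ∈ Set.Ioo (0:ℝ) 1 → β^q * (1-y)^q ≤ ψ y →
      β * (1-y) ≤ ψ y ^ ((1:ℝ)/q) := by
    intro β y hβ hy h
    have h2 : (0:ℝ) ≤ β^q * (1-y)^q :=
      mul_nonneg (Real.rpow_nonneg hβ _) (Real.rpow_nonneg (by linarith [hy.2]) _)
    have := Real.rpow_le_rpow h2 h (by positivity : (0:ℝ) ≤ 1/q)
    rwa [hroot β (1-y) hβ (by linarith [hy.2])] at this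
  -- splitting exponents
  have hsplit : ∀ y : ℝ, y < 1 → (1-y)^(q-1) = (1-y)^(q-2) * (1-y) := by
    intro y hy
    rw [show q-1 = (q-2)+1 by ring, Real.rpow_add (by linarith) (q-2) 1, Real.rpow_one]
  have hsplit2 : ∀ y : ℝ, y < 1 → (1-y)^q = (1-y)^(q-2) * (1-y)^(2:ℕ) := by
    intro y hy
    rw [← Real.rpow_natCast (1-y) 2, ← Real.rpow_add (by linarith : (0:ℝ) < 1-y)]
    norm_num
  -- upper persistence
  have upper_persist : ∀ β : ℝ, b < β → ∀ y1 ∈ Set.Ioo (0:ℝ) 1,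
      β^q * (1-y1)^(q-2) < β - b → ψ y1 ≤ β^q * (1-y1)^q →
      ∀ y, y1 ≤ y → y < 1 → ψ y ≤ β^q * (1-y)^q := by
    intro β hβ y1 hy1 hcond hstart y hyle hylt
    have hβ0 : 0 < β := lt_trans hb hβ
    have h01 : Set.Icc y1 y ⊆ Set.Ioo (0:ℝ) 1 := fun x hx =>
      ⟨lt_of_lt_of_le hy1.1 hx.1, lt_of_le_of_lt hx.2 hylt⟩
    have key : ψ y - β^q * (1-y)^q ≤ 0 := by
      refine persist_aux (h := fun t => ψ t - β^q * (1-t)^q)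
        (h' := fun t => ψd t + β^q * q * (1-t)^(q-1)) hyle ?_ ?_ (by linarith)
      · intro t ht
        have ht' := h01 ht
        have := (hDψ t ht').sub (hbar (β^q) t)
        refine this.congr_deriv ?_
        ring
      · intro t ht h0'
        have ht' := h01 ht
        have h1t : 0 < 1 - t := by linarith [ht'.2]
        have hψt : ψ t = β^q * (1-t)^q := by linarith
        have hrt : ψ t ^ ((1:ℝ)/q) = β * (1-t) := by
          rw [hψt, hroot β (1-t) hβ0.le h1t.le]
        have hmono : β^q * (1-t)^(q-2) ≤ β^q * (1-y1)^(q-2) :=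
          mul_le_mul_of_nonneg_left
            (Real.rpow_le_rpow h1t.le (by linarith [ht.1]) (by linarith))
            (Real.rpow_nonneg hβ0.le q)
        have hbr : b - β + β^q * (1-t)^(q-2) < 0 := by linarith
        show ψd t + β^q * q * (1-t)^(q-1) < 0
        rw [hode t ht', hrt, hsplit t ht'.2]
        have heq : q*b*(1-t) - q*(β*(1-t)) + β^q * q * ((1-t)^(q-2) * (1-t))
            = q*(1-t)*(b - β + β^q * (1-t)^(q-2)) := by ring
        rw [heq]
        exact mul_neg_of_pos_of_neg (mul_pos hq0 h1t) hbr
    linarith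
  -- lower persistence
  have lower_persist : ∀ β : ℝ, 0 < β → β < b → ∀ y1 ∈ Set.Ioo (0:ℝ) 1,
      β^q * (1-y1)^q ≤ ψ y1 →
      ∀ y, y1 ≤ y → y < 1 → β^q * (1-y)^q ≤ ψ y := by
    intro β hβ0 hβ y1 hy1 hstart y hyle hylt
    have h01 : Set.Icc y1 y ⊆ Set.Ioo (0:ℝ) 1 := fun x hx =>
      ⟨lt_of_lt_of_le hy1.1 hx.1, lt_of_le_of_lt hx.2 hylt⟩
    have key : β^q * (1-y)^q - ψ y ≤ 0 := by
      refine persist_aux (h := fun t => β^q * (1-t)^q - ψ t)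
        (h' := fun t => -(β^q * q * (1-t)^(q-1)) - ψd t) hyle ?_ ?_ (by linarith)
      · intro t ht
        exact (hbar (β^q) t).sub (hDψ t (h01 ht))
      · intro t ht h0'
        have ht' := h01 ht
        have h1t : 0 < 1 - t := by linarith [ht'.2]
        have hψt : ψ t = β^q * (1-t)^q := by linarith
        have hrt : ψ t ^ ((1:ℝ)/q) = β * (1-t) := by
          rw [hψt, hroot β (1-t) hβ0.le h1t.le]
        have hq1t : 0 < β^q * q * (1-t)^(q-1) :=
          mul_pos (mul_pos (Real.rpow_pos_of_pos hβ0 q) hq0) (Real.rpow_pos_of_pos h1t _)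
        show -(β^q * q * (1-t)^(q-1)) - ψd t < 0
        rw [hode t ht', hrt]
        have : q*(β*(1-t)) - q*b*(1-t) = q*(1-t)*(β - b) := by ring
        nlinarith [mul_pos hq0 h1t]
    linarith
  -- extraction from the filter
  have hIoo : ∀ s ∈ 𝓝[<] (1:ℝ), ∃ Y, Y ∈ Set.Ioo (0:ℝ) 1 ∧ Set.Ioo Y 1 ⊆ s := by
    intro s hs
    obtain ⟨l, hl, hsub⟩ := mem_nhdsLT_iff_exists_Ioo_subset.1 hs
    refine ⟨max l (1/2), ⟨lt_of_lt_of_le (by norm_num) (le_max_right _ _),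
      max_lt hl (by norm_num)⟩, fun y hy => hsub ⟨lt_of_le_of_lt (le_max_left _ _) hy.1, hy.2⟩⟩
  have htend : Tendsto (fun y : ℝ => (1-y)^(q-2)) (𝓝[<] (1:ℝ)) (𝓝 0) := by
    have ht1 : Tendsto (fun y : ℝ => 1 - y) (𝓝 1) (𝓝 0) := by
      have h' : Tendsto (fun y : ℝ => 1 - y) (𝓝 1) (𝓝 (1-1)) :=
        (continuous_const.sub continuous_id).continuousAt
      simpa using h'
    have ht2 : Tendsto (fun x : ℝ => x^(q-2)) (𝓝 0) (𝓝 ((0:ℝ)^(q-2))) :=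
      (Real.continuousAt_rpow_const 0 _ (Or.inr (by linarith))).tendsto
    have h3 := ht2.comp ht1
    rw [Real.zero_rpow (by linarith : (0:ℝ) < q - 2).ne'] at h3
    exact h3.mono_left nhdsWithin_le_nhds
  have hsmallpow : ∀ c : ℝ, 0 < c → ∃ Y, Y ∈ Set.Ioo (0:ℝ) 1 ∧
      ∀ y, Y ≤ y → y < 1 → (1-y)^(q-2) < c := by
    intro c hc
    obtain ⟨Y, hY, hsub⟩ := hIoo _ ((tendsto_order.1 htend).2 c hc)
    refine ⟨(Y+1)/2, ⟨by linarith [hY.1], by linarith [hY.2]⟩, fun y h1 h2 => ?_⟩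
    exact hsub ⟨by linarith [hY.2], h2⟩
  -- the smallness hypothesis in usable form
  set m : ℝ := q/(2*p) with hmdef
  have hm : 0 < m := by positivity
  set ε₀ : ℝ := (m/2)^p with hεdef
  have hε₀ : 0 < ε₀ := Real.rpow_pos_of_pos (by positivity) _
  have hε₀root : ε₀ ^ ((1:ℝ)/p) = m/2 := by
    rw [hεdef, ← Real.rpow_mul (by positivity), mul_one_div, div_self hp0.ne', Real.rpow_one]
  have hε : ∃ Y, Y ∈ Set.Ioo (0:ℝ) 1 ∧ ∀ y, Y ≤ y → y < 1 → ψ y ≤ ε₀ * (1-y)^p := by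
    obtain ⟨Y, hY, hsub⟩ := hIoo _ ((tendsto_order.1 h0).2 ε₀ hε₀)
    refine ⟨(Y+1)/2, ⟨by linarith [hY.1], by linarith [hY.2]⟩, fun y h1 h2 => ?_⟩
    have h3 : ψ y * (1-y)^(-p) < ε₀ := hsub ⟨by linarith [hY.2], h2⟩
    have h1y : (0:ℝ) < 1 - y := by linarith
    have hyp : (0:ℝ) < (1-y)^p := Real.rpow_pos_of_pos h1y p
    rw [Real.rpow_neg h1y.le, ← div_eq_mul_inv, div_lt_iff₀ hyp] at h3
    linarith
  -- Step 1: crude global upper barrier with β = 2b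
  have hκ0 : (0:ℝ) < (2*b)^q := Real.rpow_pos_of_pos (by linarith) q
  have step1 : ∃ Ys, Ys ∈ Set.Ioo (0:ℝ) 1 ∧
      ∀ y, Ys ≤ y → y < 1 → ψ y ≤ (2*b)^q * (1-y)^q := by
    obtain ⟨Yε, hYε, hboundε⟩ := hε
    obtain ⟨Yp, hYp, hpow⟩ := hsmallpow (b/((2*b)^q)) (by positivity)
    set Y : ℝ := max Yε Yp with hYdef
    have hY : Y ∈ Set.Ioo (0:ℝ) 1 := ⟨lt_of_lt_of_le hYε.1 (le_max_left _ _), max_lt hYε.2 hYp.2⟩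
    set Z : ℝ := Y + 3*(1-Y)/4 with hZdef
    have hZ1 : Z < 1 := by rw [hZdef]; linarith [hY.2]
    have hYZ : Y ≤ Z := by rw [hZdef]; linarith [hY.2]
    have hZ' : Z ∈ Set.Ioo (0:ℝ) 1 := ⟨by rw [hZdef]; linarith [hY.1, hY.2], hZ1⟩
    have hsub01 : Set.Icc Y Z ⊆ Set.Ioo (0:ℝ) 1 := fun x hx =>
      ⟨lt_of_lt_of_le hY.1 hx.1, lt_of_le_of_lt hx.2 hZ1⟩
    have hexist : ∃ y1, y1 ∈ Set.Icc Y Z ∧ ψ y1 ≤ (2*b)^q * (1-y1)^q := by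
      by_contra hcon
      push_neg at hcon
      have hdec : ψ Z ^ ((1:ℝ)/p) + m*Z ≤ ψ Y ^ ((1:ℝ)/p) + m*Y := by
        refine antitone_aux (f := fun t => ψ t ^ ((1:ℝ)/p) + m*t)
          (f' := fun t => ψd t * (1/p) * ψ t ^ ((1:ℝ)/p - 1) + m) hYZ ?_ ?_
        · intro t ht
          have ht' := hsub01 ht
          have h1 := (hDψ t ht').rpow_const (p := (1:ℝ)/p) (Or.inl (hpos t ht').ne')
          have h2 : HasDerivAt (fun x : ℝ => m*x) (m*1) t := (hasDerivAt_id t).const_mul m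
          have := h1.add h2
          refine this.congr_deriv ?_
          ring
        · intro t ht
          have ht' := hsub01 ht
          have hψt := hpos t ht'
          have h1t : (0:ℝ) < 1 - t := by linarith [ht'.2]
          have h2b : 2*b*(1-t) ≤ ψ t ^ ((1:ℝ)/q) := by
            have := hrootge (2*b) t (by linarith) ht' (hcon t ht).le
            linarith
          have hψd : ψd t ≤ -(q/2 * ψ t ^ ((1:ℝ)/q)) := by
            rw [hode t ht']
            nlinarith [hq0]
          have hpow1 : (0:ℝ) < ψ t ^ ((1:ℝ)/p - 1) := Real.rpow_pos_of_pos hψt _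
          have hmul : ψd t * (1/p) * ψ t ^ ((1:ℝ)/p - 1)
              ≤ (-(q/2 * ψ t ^ ((1:ℝ)/q))) * (1/p) * ψ t ^ ((1:ℝ)/p - 1) := by
            apply mul_le_mul_of_nonneg_right _ hpow1.le
            apply mul_le_mul_of_nonneg_right hψd (by positivity)
          have hexp : ψ t ^ ((1:ℝ)/q) * ψ t ^ ((1:ℝ)/p - 1) = 1 := by
            rw [← Real.rpow_add hψt, h1q, show (p-1)/p + (1/p - 1) = 0 by field_simp; ring,
              Real.rpow_zero]
          have heq : (-(q/2 * ψ t ^ ((1:ℝ)/q))) * (1/p) * ψ t ^ ((1:ℝ)/p - 1)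
              = -(q/(2*p)) * (ψ t ^ ((1:ℝ)/q) * ψ t ^ ((1:ℝ)/p - 1)) := by ring
          rw [heq, hexp, mul_one] at hmul
          rw [hmdef]
          linarith
      have hφY : ψ Y ^ ((1:ℝ)/p) ≤ (m/2) * (1-Y) := by
        have h1 := hboundε Y (le_max_left _ _) hY.2
        have h1Y : (0:ℝ) < 1 - Y := by linarith [hY.2]
        have h2 := Real.rpow_le_rpow (hpos Y hY).le h1 (by positivity : (0:ℝ) ≤ 1/p)
        rwa [Real.mul_rpow hε₀.le (Real.rpow_nonneg h1Y.le p),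
          ← Real.rpow_mul h1Y.le, mul_one_div, div_self hp0.ne', Real.rpow_one, hε₀root] at h2
      have hφZ : (0:ℝ) < ψ Z ^ ((1:ℝ)/p) := Real.rpow_pos_of_pos (hpos Z hZ') _
      have h1Y : (0:ℝ) < 1 - Y := by linarith [hY.2]
      rw [hZdef] at hdec
      nlinarith [mul_pos hm h1Y]
    obtain ⟨y1, hy1, hy1le⟩ := hexist
    have hy1' : y1 ∈ Set.Ioo (0:ℝ) 1 := hsub01 hy1
    have hcond : (2*b)^q * (1-y1)^(q-2) < 2*b - b := by
      have h1 := hpow y1 (le_trans (le_max_right _ _) hy1.1) hy1'.2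
      have : (2*b)^q * (1-y1)^(q-2) < (2*b)^q * (b/((2*b)^q)) :=
        mul_lt_mul_of_pos_left h1 hκ0
      rw [mul_div_cancel₀ b hκ0.ne'] at this
      linarith
    exact ⟨y1, hy1', fun y hle hlt =>
      upper_persist (2*b) (by linarith) y1 hy1' hcond hy1le y hle hlt⟩
  -- Step 2: refined upper bounds
  have step2 : ∀ β : ℝ, b < β → β < 2*b → ∃ Ys, Ys ∈ Set.Ioo (0:ℝ) 1 ∧
      ∀ y, Ys ≤ y → y < 1 → ψ y ≤ β^q * (1-y)^q := by
    intro β hβ1 hβ2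
    have hβ0 : 0 < β := lt_trans hb hβ1
    obtain ⟨Y1, hY1, hglob⟩ := step1
    have hδ : (0:ℝ) < (β - b)/2 := by linarith
    have hβκ : β^q ≤ (2*b)^q := Real.rpow_le_rpow hβ0.le (by linarith) hq0.le
    obtain ⟨Yp, hYp, hpow⟩ := hsmallpow
      (min (((β-b)/2)/((2*b)^q)) ((3/8)*q*((β-b)/2)/((2*b)^q))) (by positivity)
    set Y : ℝ := max Y1 Yp with hYdef
    have hY : Y ∈ Set.Ioo (0:ℝ) 1 := ⟨lt_of_lt_of_le hY1.1 (le_max_left _ _), max_lt hY1.2 hYp.2⟩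
    have h1Y : (0:ℝ) < 1 - Y := by linarith [hY.2]
    have hc1 : (2*b)^q * (1-Y)^(q-2) < (β-b)/2 := by
      have h1 := hpow Y (le_max_right _ _) hY.2
      have h2 : (1-Y)^(q-2) < ((β-b)/2)/((2*b)^q) := lt_of_lt_of_le h1 (min_le_left _ _)
      have := mul_lt_mul_of_pos_left h2 hκ0
      rwa [mul_div_cancel₀ _ hκ0.ne'] at this
    have hc2 : (2*b)^q * (1-Y)^(q-2) < (3/8)*q*((β-b)/2) := by
      have h1 := hpow Y (le_max_right _ _) hY.2
      have h2 : (1-Y)^(q-2) < ((3/8)*q*((β-b)/2))/((2*b)^q) := lt_of_lt_of_le h1 (min_le_right _ _)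
      have := mul_lt_mul_of_pos_left h2 hκ0
      rwa [mul_div_cancel₀ _ hκ0.ne'] at this
    set Z : ℝ := (1+Y)/2 with hZdef
    have hZ1 : Z < 1 := by rw [hZdef]; linarith
    have hYZ : Y ≤ Z := by rw [hZdef]; linarith
    have hZ' : Z ∈ Set.Ioo (0:ℝ) 1 := ⟨by rw [hZdef]; linarith [hY.1], hZ1⟩
    have hsub01 : Set.Icc Y Z ⊆ Set.Ioo (0:ℝ) 1 := fun x hx =>
      ⟨lt_of_lt_of_le hY.1 hx.1, lt_of_le_of_lt hx.2 hZ1⟩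
    have hexist : ∃ y1, y1 ∈ Set.Icc Y Z ∧ ψ y1 ≤ β^q * (1-y1)^q := by
      by_contra hcon
      push_neg at hcon
      have hdec : ψ Z - β^q * (1-Z)^q ≤ (ψ Y - β^q * (1-Y)^q)
          - (q*((β-b)/2))*((1-Y)^(2:ℕ) - (1-Z)^(2:ℕ))/2 := by
        refine decrease_aux (g := fun t => ψ t - β^q * (1-t)^q)
          (g' := fun t => ψd t + β^q * q * (1-t)^(q-1)) hYZ ?_ ?_
        · intro t ht
          have := (hDψ t (hsub01 ht)).sub (hbar (β^q) t)
          refine this.congr_deriv ?_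
          ring
        · intro t ht
          have ht' := hsub01 ht
          have h1t : (0:ℝ) < 1 - t := by linarith [ht'.2]
          have hA : β * (1-t) ≤ ψ t ^ ((1:ℝ)/q) := hrootge β t hβ0.le ht' (hcon t ht).le
          have hB : β^q * (1-t)^(q-2) ≤ (2*b)^q * (1-Y)^(q-2) := by
            apply mul_le_mul hβκ
              (Real.rpow_le_rpow h1t.le (by linarith [ht.1]) (by linarith))
              (Real.rpow_nonneg h1t.le _) hκ0.le
          have hB' : β^q * (1-t)^(q-2) ≤ (β-b)/2 := le_of_lt (lt_of_le_of_lt hB hc1)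
          have h1 : q * (β*(1-t)) ≤ q * ψ t ^ ((1:ℝ)/q) :=
            mul_le_mul_of_nonneg_left hA hq0.le
          have h2 : β^q * q * ((1-t)^(q-2) * (1-t)) ≤ ((β-b)/2) * (q * (1-t)) := by
            calc β^q * q * ((1-t)^(q-2) * (1-t)) = (β^q * (1-t)^(q-2)) * (q * (1-t)) := by ring
              _ ≤ ((β-b)/2) * (q * (1-t)) :=
                mul_le_mul_of_nonneg_right hB' (mul_pos hq0 h1t).le
          show ψd t + β^q * q * (1-t)^(q-1) ≤ -((q*((β-b)/2))*(1-t))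
          rw [hode t ht', hsplit t ht'.2]
          have e : q*b*(1-t) - q*(β*(1-t)) + ((β-b)/2)*(q*(1-t)) + (q*((β-b)/2))*(1-t) = 0 := by
            ring
          linarith [h1, h2, e]
      have hgZ : 0 < ψ Z - β^q * (1-Z)^q := by
        have := hcon Z (Set.right_mem_Icc.2 hYZ)
        linarith
      have hgY : ψ Y - β^q * (1-Y)^q ≤ (2*b)^q * (1-Y)^q := by
        have h1 := hglob Y (le_max_left _ _) hY.2
        have h2 : 0 ≤ β^q * (1-Y)^q :=
          mul_nonneg (Real.rpow_nonneg hβ0.le _) (Real.rpow_nonneg h1Y.le _)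
        linarith
      have hZY : (1:ℝ) - Z = (1-Y)/2 := by rw [hZdef]; ring
      have hqY : (2*b)^q * (1-Y)^q < (3/8)*q*((β-b)/2) * (1-Y)^(2:ℕ) := by
        rw [hsplit2 Y hY.2]
        have hsq : (0:ℝ) < (1-Y)^(2:ℕ) := by positivity
        calc (2*b)^q * ((1-Y)^(q-2) * (1-Y)^(2:ℕ))
            = ((2*b)^q * (1-Y)^(q-2)) * (1-Y)^(2:ℕ) := by ring
          _ < (3/8)*q*((β-b)/2) * (1-Y)^(2:ℕ) := by
              exact mul_lt_mul_of_pos_right hc2 hsq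
      rw [hZY] at hdec hgZ
      have hid : ((1-Y)^(2:ℕ) - ((1-Y)/2)^(2:ℕ)) = (3/4) * (1-Y)^(2:ℕ) := by ring
      rw [hid] at hdec
      linarith [hdec, hgZ, hgY, hqY]
    obtain ⟨y1, hy1, hy1le⟩ := hexist
    have hy1' : y1 ∈ Set.Ioo (0:ℝ) 1 := hsub01 hy1
    have hcond : β^q * (1-y1)^(q-2) < β - b := by
      have hB : β^q * (1-y1)^(q-2) ≤ (2*b)^q * (1-Y)^(q-2) := by
        apply mul_le_mul hβκ
          (Real.rpow_le_rpow (by linarith [hy1'.2]) (by linarith [hy1.1]) (by linarith))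
          (Real.rpow_nonneg (by linarith [hy1'.2]) _) hκ0.le
      linarith [lt_of_le_of_lt hB hc1]
    exact ⟨y1, hy1', fun y hle hlt =>
      upper_persist β hβ1 y1 hy1' hcond hy1le y hle hlt⟩
  -- Step 3: lower bounds
  have step3 : ∀ β : ℝ, 0 < β → β < b → ∃ Ys, Ys ∈ Set.Ioo (0:ℝ) 1 ∧
      ∀ y, Ys ≤ y → y < 1 → β^q * (1-y)^q ≤ ψ y := by
    intro β hβ0 hβ
    have hδ : (0:ℝ) < (b - β)/2 := by linarith
    have hβq : (0:ℝ) < β^q := Real.rpow_pos_of_pos hβ0 q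
    obtain ⟨Yp, hYp, hpow⟩ := hsmallpow ((3/4)*q*((b-β)/2)/(β^q)) (by positivity)
    set Y : ℝ := Yp with hYdef
    have hY : Y ∈ Set.Ioo (0:ℝ) 1 := hYp
    have h1Y : (0:ℝ) < 1 - Y := by linarith [hY.2]
    have hc2 : β^q * (1-Y)^(q-2) < (3/4)*q*((b-β)/2) := by
      have h2 := hpow Y (le_refl _) hY.2
      have := mul_lt_mul_of_pos_left h2 hβq
      rwa [mul_div_cancel₀ _ hβq.ne'] at this
    set Z : ℝ := (1+Y)/2 with hZdef
    have hZ1 : Z < 1 := by rw [hZdef]; linarith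
    have hYZ : Y ≤ Z := by rw [hZdef]; linarith
    have hsub01 : Set.Icc Y Z ⊆ Set.Ioo (0:ℝ) 1 := fun x hx =>
      ⟨lt_of_lt_of_le hY.1 hx.1, lt_of_le_of_lt hx.2 hZ1⟩
    have hexist : ∃ y1, y1 ∈ Set.Icc Y Z ∧ β^q * (1-y1)^q ≤ ψ y1 := by
      by_contra hcon
      push_neg at hcon
      have hdec : β^q * (1-Z)^q - ψ Z ≤ (β^q * (1-Y)^q - ψ Y)
          - (2*q*((b-β)/2))*((1-Y)^(2:ℕ) - (1-Z)^(2:ℕ))/2 := by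
        refine decrease_aux (g := fun t => β^q * (1-t)^q - ψ t)
          (g' := fun t => -(β^q * q * (1-t)^(q-1)) - ψd t) hYZ ?_ ?_
        · intro t ht
          exact (hbar (β^q) t).sub (hDψ t (hsub01 ht))
        · intro t ht
          have ht' := hsub01 ht
          have h1t : (0:ℝ) < 1 - t := by linarith [ht'.2]
          have hA : ψ t ^ ((1:ℝ)/q) ≤ β * (1-t) := hrootle β t hβ0.le ht' (hcon t ht).le
          have h1 : q * ψ t ^ ((1:ℝ)/q) ≤ q * (β*(1-t)) :=
            mul_le_mul_of_nonneg_left hA hq0.le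
          have hpos1 : (0:ℝ) ≤ β^q * q * (1-t)^(q-1) :=
            mul_nonneg (mul_nonneg hβq.le hq0.le) (Real.rpow_nonneg h1t.le _)
          show -(β^q * q * (1-t)^(q-1)) - ψd t ≤ -((2*q*((b-β)/2))*(1-t))
          rw [hode t ht']
          have e : -(q*b*(1-t)) + q*(β*(1-t)) + (2*q*((b-β)/2))*(1-t) = 0 := by ring
          linarith [h1, hpos1, e]
      have hgZ : 0 < β^q * (1-Z)^q - ψ Z := by
        have := hcon Z (Set.right_mem_Icc.2 hYZ)
        linarith
      have hgY : β^q * (1-Y)^q - ψ Y ≤ β^q * (1-Y)^q := by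
        have h1 := hψ.2.2.1 Y ⟨hY.1.le, hY.2⟩
        linarith
      have hZY : (1:ℝ) - Z = (1-Y)/2 := by rw [hZdef]; ring
      have hqY : β^q * (1-Y)^q < (3/4)*q*((b-β)/2) * (1-Y)^(2:ℕ) := by
        rw [hsplit2 Y hY.2]
        have hsq : (0:ℝ) < (1-Y)^(2:ℕ) := by positivity
        calc β^q * ((1-Y)^(q-2) * (1-Y)^(2:ℕ))
            = (β^q * (1-Y)^(q-2)) * (1-Y)^(2:ℕ) := by ring
          _ < (3/4)*q*((b-β)/2) * (1-Y)^(2:ℕ) := mul_lt_mul_of_pos_right hc2 hsq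
      rw [hZY] at hdec hgZ
      have hid : ((1-Y)^(2:ℕ) - ((1-Y)/2)^(2:ℕ)) = (3/4) * (1-Y)^(2:ℕ) := by ring
      rw [hid] at hdec
      linarith [hdec, hgZ, hgY, hqY]
    obtain ⟨y1, hy1, hy1le⟩ := hexist
    have hy1' : y1 ∈ Set.Ioo (0:ℝ) 1 := hsub01 hy1
    exact ⟨y1, hy1', fun y hle hlt =>
      lower_persist β hβ0 hβ y1 hy1' hy1le y hle hlt⟩
  -- final assembly
  have hrootpow2 : ∀ x : ℝ, 0 ≤ x → (x ^ q) ^ ((1:ℝ)/q) = x := by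
    intro x hx
    rw [← Real.rpow_mul hx, mul_one_div, div_self hq0.ne', Real.rpow_one]
  have hKb : 0 < b^q := Real.rpow_pos_of_pos hb q
  have hKeq : a ^ (p*(2-p)/(p-1)) = b^q := by
    rw [hbdef, hqdef, ← Real.rpow_mul ha.le]
    congr 1
    field_simp
  rw [hKeq]
  refine tendsto_order.2 ⟨?_, ?_⟩
  · -- lower bound
    intro c hc
    set c'' : ℝ := (max c 0 + b^q)/2 with hc''def
    have hc''0 : 0 < c'' := by
      have := le_max_right c 0
      rw [hc''def]; linarith
    have hc''K : c'' < b^q := by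
      have := max_lt hc hKb
      rw [hc''def]; linarith
    have hc''c : c < c'' := by
      have := le_max_left c 0
      rw [hc''def]; linarith
    set β : ℝ := c'' ^ ((1:ℝ)/q) with hβdef
    have hβ0 : 0 < β := Real.rpow_pos_of_pos hc''0 _
    have hβq : β^q = c'' := hrootpow c'' hc''0.le
    have hβb : β < b := by
      have h1 := Real.rpow_lt_rpow hc''0.le hc''K (by positivity : (0:ℝ) < 1/q)
      rwa [hrootpow2 b hb.le] at h1
    obtain ⟨Ys, hYs, hbound⟩ := step3 β hβ0 hβb
    filter_upwards [Ioo_mem_nhdsLT_of_mem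
      (show (1:ℝ) ∈ Set.Ioc Ys 1 from ⟨hYs.2, le_refl _⟩)] with y hy
    have h1y : (0:ℝ) < 1 - y := by linarith [hy.2]
    have hq' : (0:ℝ) < (1-y)^q := Real.rpow_pos_of_pos h1y q
    have hby := hbound y hy.1.le hy.2
    rw [hβq] at hby
    rw [Real.rpow_neg h1y.le, ← div_eq_mul_inv, lt_div_iff₀ hq']
    have := mul_lt_mul_of_pos_right hc''c hq'
    linarith
  · -- upper bound
    intro c hc
    have hκ0K : b^q < (2*b)^q := Real.rpow_lt_rpow hb.le (by linarith) hq0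
    set c'' : ℝ := (b^q + min c ((2*b)^q))/2 with hc''def
    have h1 : b^q < c'' := by
      have := lt_min hc hκ0K
      rw [hc''def]; linarith
    have h2 : c'' < (2*b)^q := by
      have := min_le_right c ((2*b)^q)
      rw [hc''def]; linarith
    have h3 : c'' < c := by
      have := min_le_left c ((2*b)^q)
      rw [hc''def]; linarith
    have hc''0 : 0 < c'' := lt_trans hKb h1
    set β : ℝ := c'' ^ ((1:ℝ)/q) with hβdef
    have hβq : β^q = c'' := hrootpow c'' hc''0.le
    have hβb : b < β := by
      have h4 := Real.rpow_lt_rpow (Real.rpow_nonneg hb.le q) h1 (by positivity : (0:ℝ) < 1/q)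
      rwa [hrootpow2 b hb.le] at h4
    have hβ2b : β < 2*b := by
      have h4 := Real.rpow_lt_rpow hc''0.le h2 (by positivity : (0:ℝ) < 1/q)
      rwa [hrootpow2 (2*b) (by linarith)] at h4
    obtain ⟨Ys, hYs, hbound⟩ := step2 β hβb hβ2b
    filter_upwards [Ioo_mem_nhdsLT_of_mem
      (show (1:ℝ) ∈ Set.Ioc Ys 1 from ⟨hYs.2, le_refl _⟩)] with y hy
    have h1y : (0:ℝ) < 1 - y := by linarith [hy.2]
    have hq' : (0:ℝ) < (1-y)^q := Real.rpow_pos_of_pos h1y q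
    have hby := hbound y hy.1.le hy.2
    rw [hβq] at hby
    rw [Real.rpow_neg h1y.le, ← div_eq_mul_inv, div_lt_iff₀ hq']
    have := mul_lt_mul_of_pos_right h3 hq'
    linarith
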